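/- Let q : {α−1+s : s = 0,…,b+1} → [0,∞) be a nontrivial function with Σ_{s=0}^{b+1} G(s+α−1,s)·q(s+α−1) > 0 and Σ_{s ∈ S} λ·G(s+α−1,s)·q(s+α−1) > 0, where λ ∈ (0,1) satisfies min_{t ∈ I} G(t,s) ≥ λ·G(s+α−1,s) for every integer s ∈ {0,1,…,b+1} and S := { integer s : (b+α)/4 ≤ s ≤ 3(b+α)/4 }. Let f : [0,∞) → [0,∞) be continuous and suppose there exist constants 0 < r₁ < r₂ such that f(x) ≥ γ*·r₁ for all x ∈ [0,r₁] and f(x) ≤ γ·r₂ for all x ∈ [0,r₂]. Then the discrete fractional boundary value problem Δ^{α}y(t) + q(t+α−1)·f(y(t+α−1)) = 0 for t = 0,…,b+1, y(α−2) = y(α+b+1) = 0, has at least one solution y : T_b → ℝ with y(t) ≥ 0 for all t ∈ T_b and r₁ ≤ max_{t ∈ T_b} |y(t)| ≤ r₂. -/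

import Mathlib

/-- Falling power `x^[y] = Γ(x+1)/Γ(x-y+1)`; it equals 0 when `x-y+1` is a
nonpositive integer since `Real.Gamma` vanishes there (and division by zero is zero). -/
noncomputable def fp (x y : ℝ) : ℝ := Real.Gamma (x + 1) / Real.Gamma (x - y + 1)

/-- The Green function `G(t,s)` of the discrete fractional boundary value problem,
for `t ∈ T_b` (a real number) and an integer `s ∈ {0,1,…,b+1}`. -/
noncomputable def G (α : ℝ) (b : ℕ) (t : ℝ) (s : ℕ) : ℝ :=
  if (s : ℝ) ≤ t - α + 1 then
    1 / Real.Gamma α *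
      (fp t (α - 1) * fp (α + b - s) (α - 1) / fp (α + b + 1) (α - 1) - fp (t - s - 1) (α - 1))
  else
    1 / Real.Gamma α * (fp t (α - 1) * fp (α + b - s) (α - 1) / fp (α + b + 1) (α - 1))

/-- A function `y : T_b → ℝ`, `T_b = {α-2+k : k = 0,…,b+3}`, is encoded as `y : ℕ → ℝ`
via `k ↦ y(α-2+k)`.  `fracSum α y k` is the discrete fractional sum
`(Δ^{-(2-α)} y)(t)` of order `2-α ∈ [0,1)` starting at `a = α-2`, evaluated at the
point `t = a + (2-α) + k = k`; when `α = 2` we use the convention `Δ^0 y = y`. -/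
noncomputable def fracSum (α : ℝ) (y : ℕ → ℝ) (k : ℕ) : ℝ :=
  if α = 2 then y k
  else 1 / Real.Gamma (2 - α) *
    ∑ j ∈ Finset.range (k + 1), fp ((k : ℝ) - (j : ℝ) + 1 - α) (1 - α) * y j

/-- The discrete fractional difference `(Δ^α y)(t) = Δ²(Δ^{-(2-α)} y)(t)` at `t ∈ ℕ`,
where `Δ` is the forward difference. -/
noncomputable def fracDiff (α : ℝ) (y : ℕ → ℝ) (t : ℕ) : ℝ :=
  fracSum α y (t + 2) - 2 * fracSum α y (t + 1) + fracSum α y t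

open Real Finset

set_option linter.unusedSectionVars false
set_option linter.unusedVariables false

namespace S10

variable (α : ℝ)

noncomputable def Ff (k : ℕ) : ℝ := Real.Gamma (α - 1 + k) / Real.Gamma k

noncomputable def Ee (k : ℕ) : ℝ := Real.Gamma (α - 1 + k) / Real.Gamma (k + 1)

noncomputable def Dd (m : ℕ) : ℝ := Real.Gamma (m + 2 - α) / Real.Gamma (m + 1)

section basics

variable (hα1 : 1 < α) (hα2 : α ≤ 2)
include hα1

lemma alk_pos (k : ℕ) : (0:ℝ) < α - 1 + k := by
  have : (0:ℝ) ≤ k := Nat.cast_nonneg k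
  linarith

lemma Ee_pos (k : ℕ) : 0 < Ee α k := by
  have h1 := alk_pos α hα1 k
  have h2 : (0:ℝ) < (k:ℝ) + 1 := by positivity
  exact div_pos (Real.Gamma_pos_of_pos h1) (Real.Gamma_pos_of_pos h2)

lemma Ff_zero : Ff α 0 = 0 := by simp [Ff, Real.Gamma_zero]

lemma Ff_eq (k : ℕ) : Ff α k = k * Ee α k := by
  cases k with
  | zero => simp [Ff_zero α hα1, Ee]
  | succ n =>
    unfold Ff Ee
    have hc : ((n+1 : ℕ) : ℝ) = (n:ℝ) + 1 := by push_cast; ring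
    have hΓ : Real.Gamma ((n:ℝ)+1) ≠ 0 := ne_of_gt (Real.Gamma_pos_of_pos (by positivity))
    have h : Real.Gamma (((n:ℝ)+1)+1) = ((n:ℝ)+1) * Real.Gamma ((n:ℝ)+1) :=
      Real.Gamma_add_one (by positivity)
    rw [hc, h]
    rw [div_mul_eq_div_div_swap]
    rw [mul_div_cancel₀ _ (by positivity : ((n:ℝ)+1) ≠ 0)]

lemma Ff_pos (k : ℕ) (hk : 1 ≤ k) : 0 < Ff α k := by
  rw [Ff_eq α hα1]
  have h1 := Ee_pos α hα1 k
  have h2 : (0:ℝ) < (k:ℝ) := by exact_mod_cast Nat.pos_of_ne_zero (by omega)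
  positivity

lemma Ff_succ (k : ℕ) : Ff α (k + 1) = Ff α k + (α - 1) * Ee α k := by
  have h1 : Ff α (k+1) = (α - 1 + k) * Ee α k := by
    unfold Ff Ee
    rw [show (α - 1 + ((k+1:ℕ):ℝ)) = (α - 1 + k) + 1 by push_cast; ring,
        Real.Gamma_add_one (ne_of_gt (alk_pos α hα1 k)),
        show (((k+1:ℕ)):ℝ) = (k:ℝ) + 1 by push_cast; ring]
    ring
  rw [h1, Ff_eq α hα1]
  ring

lemma Ff_nonneg (k : ℕ) : 0 ≤ Ff α k := by
  cases k with
  | zero => rw [Ff_zero α hα1]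
  | succ n => exact le_of_lt (Ff_pos α hα1 _ (by omega))

include hα2

lemma Ee_succ_le (k : ℕ) : Ee α (k + 1) ≤ Ee α k := by
  have h1 : Ee α (k+1) = ((α - 1 + k)/((k:ℝ)+1)) * Ee α k := by
    unfold Ee
    have hΓ : Real.Gamma ((k:ℝ)+1) ≠ 0 := ne_of_gt (Real.Gamma_pos_of_pos (by positivity))
    have h : Real.Gamma (((k:ℝ)+1)+1) = ((k:ℝ)+1) * Real.Gamma ((k:ℝ)+1) :=
      Real.Gamma_add_one (by positivity)
    rw [show (α - 1 + ((k+1:ℕ):ℝ)) = (α - 1 + k) + 1 by push_cast; ring,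
        Real.Gamma_add_one (ne_of_gt (alk_pos α hα1 k)),
        show (((k+1:ℕ)):ℝ) + 1 = ((k:ℝ) + 1) + 1 by push_cast; ring, h]
    field_simp
    try ring
  rw [h1]
  have h3 : (α - 1 + k)/((k:ℝ)+1) ≤ 1 := by
    rw [div_le_one (by positivity)]; linarith
  nlinarith [Ee_pos α hα1 k]

lemma Ee_anti {i j : ℕ} (hij : i ≤ j) : Ee α j ≤ Ee α i := by
  induction j, hij using Nat.le_induction with
  | base => exact le_rfl
  | succ n hn ih => exact le_trans (Ee_succ_le α hα1 hα2 n) ih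

omit hα2 in
lemma Ff_mono {i j : ℕ} (hij : i ≤ j) : Ff α i ≤ Ff α j := by
  induction j, hij using Nat.le_induction with
  | base => exact le_rfl
  | succ n hn ih =>
    rw [Ff_succ α hα1]
    nlinarith [Ee_pos α hα1 n]

end basics
section identities

variable (hα1 : 1 < α) (hα2 : α < 2)
include hα1 hα2

lemma Dd_pos (m : ℕ) : 0 < Dd α m := by
  have h1 : (0:ℝ) < (m:ℝ) + 2 - α := by
    have : (0:ℝ) ≤ m := Nat.cast_nonneg m
    linarith
  exact div_pos (Real.Gamma_pos_of_pos h1) (Real.Gamma_pos_of_pos (by positivity))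

omit hα1 in
lemma Dd_mul (m : ℕ) : ((m:ℝ) + 1) * Dd α (m+1) = ((m:ℝ) + 2 - α) * Dd α m := by
  unfold Dd
  have h0 : (0:ℝ) ≤ m := Nat.cast_nonneg m
  have h1 : Real.Gamma (((m:ℝ)+2-α) + 1) = ((m:ℝ)+2-α) * Real.Gamma ((m:ℝ)+2-α) :=
    Real.Gamma_add_one (by intro hc; nlinarith)
  have h2 : Real.Gamma (((m:ℝ)+1) + 1) = ((m:ℝ)+1) * Real.Gamma ((m:ℝ)+1) :=
    Real.Gamma_add_one (by positivity)
  have hΓ : Real.Gamma ((m:ℝ)+1) ≠ 0 := ne_of_gt (Real.Gamma_pos_of_pos (by positivity))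
  rw [show ((m+1:ℕ):ℝ) + 2 - α = ((m:ℝ)+2-α) + 1 by push_cast; ring,
      show ((m+1:ℕ):ℝ) + 1 = ((m:ℝ)+1) + 1 by push_cast; ring, h1, h2]
  field_simp

omit hα2 in
lemma Ee_mul (j : ℕ) : ((j:ℝ) + 1) * Ee α (j+1) = (α - 1 + j) * Ee α j := by
  unfold Ee
  have h1 : Real.Gamma ((α - 1 + j) + 1) = (α - 1 + j) * Real.Gamma (α - 1 + j) :=
    Real.Gamma_add_one (ne_of_gt (alk_pos α hα1 j))
  have h2 : Real.Gamma (((j:ℝ)+1) + 1) = ((j:ℝ)+1) * Real.Gamma ((j:ℝ)+1) :=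
    Real.Gamma_add_one (by positivity)
  have hΓ : Real.Gamma ((j:ℝ)+1) ≠ 0 := ne_of_gt (Real.Gamma_pos_of_pos (by positivity))
  rw [show (α - 1 + ((j+1:ℕ):ℝ)) = (α - 1 + j) + 1 by push_cast; ring,
      show ((j+1:ℕ):ℝ) + 1 = ((j:ℝ)+1) + 1 by push_cast; ring, h1, h2]
  field_simp

/-- The constant convolution identity (Chu–Vandermonde):
`∑_{j≤k} Dd (k-j) * Ee j = Γ(2-α)Γ(α-1)`. -/
lemma Bsum_eq (k : ℕ) :
    ∑ j ∈ Finset.range (k+1), Dd α (k-j) * Ee α j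
      = Real.Gamma (2-α) * Real.Gamma (α-1) := by
  induction k with
  | zero => simp [Dd, Ee, Real.Gamma_one]
  | succ k ih =>
    have key : ((k:ℝ)+1) * ∑ j ∈ Finset.range (k+2), Dd α (k+1-j) * Ee α j
        = ((k:ℝ)+1) * ∑ j ∈ Finset.range (k+1), Dd α (k-j) * Ee α j := by
      have expand : ∀ j ∈ Finset.range (k+2),
          ((k:ℝ)+1) * (Dd α (k+1-j) * Ee α j)
            = (((k:ℝ)+1-j) * Dd α (k+1-j)) * Ee α j
              + Dd α (k+1-j) * ((j:ℝ) * Ee α j) := by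
        intro j hj
        ring
      rw [Finset.mul_sum, Finset.sum_congr rfl expand, Finset.sum_add_distrib]
      -- first piece
      have T1 : ∑ j ∈ Finset.range (k+2), (((k:ℝ)+1-j) * Dd α (k+1-j)) * Ee α j
          = ∑ j ∈ Finset.range (k+1), (((k:ℝ)-j+2-α) * Dd α (k-j)) * Ee α j := by
        rw [Finset.sum_range_succ]
        have last0 : (((k:ℝ)+1-(k+1:ℕ)) * Dd α (k+1-(k+1))) * Ee α (k+1) = 0 := by
          push_cast; ring_nf
        rw [last0, add_zero]
        refine Finset.sum_congr rfl (fun j hj => ?_)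
        have hj' : j ≤ k := by simpa [Nat.lt_succ_iff] using hj
        have h1 : k + 1 - j = (k - j) + 1 := by omega
        have h2 : ((k:ℝ) + 1 - j) = ((k-j:ℕ):ℝ) + 1 := by
          have := Nat.cast_sub hj' (R := ℝ); push_cast [this]; ring
        rw [h1, h2, Dd_mul α hα2 (k-j)]
        have h3 : ((k-j:ℕ):ℝ) + 2 - α = (k:ℝ) - j + 2 - α := by
          have := Nat.cast_sub hj' (R := ℝ); push_cast [this]; ring
        rw [h3]
      -- second piece
      have T2 : ∑ j ∈ Finset.range (k+2), Dd α (k+1-j) * ((j:ℝ) * Ee α j)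
          = ∑ j ∈ Finset.range (k+1), Dd α (k-j) * ((α - 1 + j) * Ee α j) := by
        rw [Finset.sum_range_succ']
        have first0 : Dd α (k+1-0) * ((0:ℕ):ℝ) * Ee α 0 = 0 := by simp
        simp only [Nat.cast_zero, zero_mul, mul_zero, add_zero]
        refine Finset.sum_congr rfl (fun j hj => ?_)
        have h1 : k + 1 - (j+1) = k - j := by omega
        rw [h1, show (((j+1:ℕ)):ℝ) = (j:ℝ) + 1 by push_cast; ring, Ee_mul α hα1 j]
      rw [T1, T2, ← Finset.sum_add_distrib, Finset.mul_sum]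
      refine Finset.sum_congr rfl (fun j hj => ?_)
      ring
    have hk1 : ((k:ℝ)+1) ≠ 0 := by positivity
    have := mul_left_cancel₀ hk1 key
    rw [this, ih]

/-- `∑_{j≤k} Dd (k-j) * Ff j = Γ(2-α)Γ(α) k`. -/
lemma Asum_eq (k : ℕ) :
    ∑ j ∈ Finset.range (k+1), Dd α (k-j) * Ff α j
      = Real.Gamma (2-α) * Real.Gamma α * k := by
  induction k with
  | zero => simp [Ff_zero α hα1]
  | succ k ih =>
    rw [Finset.sum_range_succ']
    simp only [Ff_zero α hα1, mul_zero, add_zero]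
    have step : ∀ j ∈ Finset.range (k+1),
        Dd α (k+1-(j+1)) * Ff α (j+1)
          = Dd α (k-j) * Ff α j + (α-1) * (Dd α (k-j) * Ee α j) := by
      intro j hj
      have h1 : k + 1 - (j+1) = k - j := by omega
      rw [h1, Ff_succ α hα1 j]
      ring
    rw [Finset.sum_congr rfl step, Finset.sum_add_distrib, ih, ← Finset.mul_sum,
        Bsum_eq α hα1 hα2]
    have hΓ : Real.Gamma α = (α - 1) * Real.Gamma (α - 1) := by
      have := Real.Gamma_add_one (s := α - 1) (by intro h; nlinarith)
      rw [show α - 1 + 1 = α by ring] at this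
      exact this
    push_cast
    rw [hΓ]
    ring

end identities
/-- Shifted column `hcol α s m = F(m-s-1)` for `m ≥ s+1`, else `0`. -/
noncomputable def hcol (s m : ℕ) : ℝ := if s + 1 ≤ m then Ff α (m - s - 1) else 0

section fracsum

lemma fp_coeff {k j : ℕ} (hjk : j ≤ k) :
    fp ((k:ℝ) - (j:ℝ) + 1 - α) (1 - α) = Dd α (k - j) := by
  unfold fp Dd
  have hc : ((k - j:ℕ):ℝ) = (k:ℝ) - (j:ℝ) := Nat.cast_sub hjk
  rw [hc]
  congr 1 <;> ring_nf

lemma fracSum_congr {x x' : ℕ → ℝ} {k : ℕ} (h : ∀ j ≤ k, x j = x' j) :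
    fracSum α x k = fracSum α x' k := by
  unfold fracSum
  split_ifs with hα
  · exact h k le_rfl
  · congr 1
    refine Finset.sum_congr rfl (fun j hj => ?_)
    rw [h j (by simpa [Nat.lt_succ_iff] using hj)]

lemma fracSum_linear (a c : ℝ) (x w : ℕ → ℝ) (k : ℕ) :
    fracSum α (fun m => a * x m + c * w m) k
      = a * fracSum α x k + c * fracSum α w k := by
  unfold fracSum
  split_ifs with hα
  · simp
  · simp only [Finset.mul_sum, ← Finset.sum_add_distrib]
    refine Finset.sum_congr rfl (fun j hj => ?_)
    ring

lemma fracSum_sum {ι : Type*} (S : Finset ι) (c : ι → ℝ) (w : ι → ℕ → ℝ) (k : ℕ) :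
    fracSum α (fun m => ∑ s ∈ S, c s * w s m) k
      = ∑ s ∈ S, c s * fracSum α (w s) k := by
  classical
  induction S using Finset.induction with
  | empty =>
      simp only [Finset.sum_empty]
      unfold fracSum
      split_ifs <;> simp
  | insert _ _ hnot ih =>
      rename_i a T
      rw [Finset.sum_insert hnot, ← ih,
        show (fun m => ∑ s ∈ insert a T, c s * w s m)
          = fun m => c a * w a m + 1 * ((fun mm => ∑ s ∈ T, c s * w s mm) m) by
            funext m; rw [Finset.sum_insert hnot]; ring,
        fracSum_linear]
      ring

variable (hα1 : 1 < α) (hα2 : α ≤ 2)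
include hα1 hα2

lemma Ff_nat (k : ℕ) (hα : α = 2) : Ff α k = k := by
  subst hα
  cases k with
  | zero => simp [Ff, Real.Gamma_zero]
  | succ n =>
    unfold Ff
    rw [show (2 - 1 + ((n+1:ℕ):ℝ)) = ((n:ℝ)+1) + 1 by push_cast; ring,
        Real.Gamma_add_one (by positivity),
        show (((n+1:ℕ)):ℝ) = (n:ℝ)+1 by push_cast; ring,
        mul_div_assoc, div_self (ne_of_gt (Real.Gamma_pos_of_pos (by positivity))), mul_one]

lemma fracSum_Ff (k : ℕ) : fracSum α (Ff α) k = Real.Gamma α * k := by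
  unfold fracSum
  split_ifs with hα
  · rw [Ff_nat α hα1 hα2 k hα, hα, Real.Gamma_two, one_mul]
  · have hlt : α < 2 := lt_of_le_of_ne hα2 hα
    have h2α : (0:ℝ) < 2 - α := by linarith
    have hΓ : Real.Gamma (2-α) ≠ 0 := ne_of_gt (Real.Gamma_pos_of_pos h2α)
    rw [Finset.sum_congr rfl (fun j hj =>
      by rw [fp_coeff α (by simpa [Nat.lt_succ_iff] using hj)])]
    rw [Asum_eq α hα1 hlt k]
    field_simp

lemma fracSum_hcol_ge (s k : ℕ) (hsk : s + 1 ≤ k) :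
    fracSum α (hcol α s) k = Real.Gamma α * ((k - s - 1 : ℕ):ℝ) := by
  unfold fracSum
  split_ifs with hα
  · rw [show hcol α s k = Ff α (k - s - 1) by unfold hcol; rw [if_pos hsk],
      Ff_nat α hα1 hα2 _ hα]
    rw [hα, Real.Gamma_two, one_mul]
  · have hlt : α < 2 := lt_of_le_of_ne hα2 hα
    have h2α : (0:ℝ) < 2 - α := by linarith
    have hΓ : Real.Gamma (2-α) ≠ 0 := ne_of_gt (Real.Gamma_pos_of_pos h2α)
    rw [Finset.sum_congr rfl (fun j hj =>
      by rw [fp_coeff α (by simpa [Nat.lt_succ_iff] using hj)])]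
    have hsub : ∑ j ∈ Finset.range (k+1), Dd α (k - j) * hcol α s j
        = ∑ j ∈ Finset.Ico (s+1) (k+1), Dd α (k - j) * hcol α s j := by
      rw [eq_comm]
      apply Finset.sum_subset
      · intro j hj
        simp only [Finset.mem_Ico] at hj
        simp only [Finset.mem_range]
        omega
      · intro j hj hj2
        simp only [Finset.mem_range] at hj
        simp only [Finset.mem_Ico, not_and, not_le] at hj2
        have : ¬ (s + 1 ≤ j) := by omega
        unfold hcol
        rw [if_neg this, mul_zero]
    rw [hsub, Finset.sum_Ico_eq_sum_range]
    have hred : ∀ i ∈ Finset.range (k+1-(s+1)), Dd α (k - (s+1+i)) * hcol α s (s+1+i)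
        = Dd α ((k-s-1) - i) * Ff α i := by
      intro i hi
      have h1 : k - (s+1+i) = (k - s - 1) - i := by omega
      have h2 : hcol α s (s+1+i) = Ff α i := by
        unfold hcol
        rw [if_pos (by omega)]
        congr 1
        omega
      rw [h1, h2]
    rw [Finset.sum_congr rfl hred]
    have hk1 : k + 1 - (s+1) = (k - s - 1) + 1 := by omega
    rw [hk1, Asum_eq α hα1 hlt]
    field_simp

lemma fracSum_hcol_le (s k : ℕ) (hsk : k ≤ s + 1) :
    fracSum α (hcol α s) k = 0 := by
  have hz : ∀ j ≤ k, hcol α s j = (fun _ => (0:ℝ)) j := by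
    intro j hj
    unfold hcol
    rcases Nat.eq_or_lt_of_le (le_trans hj hsk) with h | h
    · rw [h]; simp [if_pos le_rfl, Ff_zero α hα1]
    · rw [if_neg (by omega)]
  rw [fracSum_congr α hz]
  unfold fracSum
  split_ifs <;> simp

lemma fracDiff_Ff (t : ℕ) : fracDiff α (Ff α) t = 0 := by
  unfold fracDiff
  rw [fracSum_Ff α hα1 hα2, fracSum_Ff α hα1 hα2, fracSum_Ff α hα1 hα2]
  push_cast
  ring

lemma fracDiff_hcol (s t : ℕ) :
    fracDiff α (hcol α s) t = if t = s then Real.Gamma α else 0 := by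
  unfold fracDiff
  rcases lt_trichotomy t s with h | h | h
  · rw [if_neg (by omega), fracSum_hcol_le α hα1 hα2 s (t+2) (by omega),
      fracSum_hcol_le α hα1 hα2 s (t+1) (by omega),
      fracSum_hcol_le α hα1 hα2 s t (by omega)]
    ring
  · subst h
    rw [if_pos rfl, fracSum_hcol_ge α hα1 hα2 t (t+2) (by omega),
      fracSum_hcol_le α hα1 hα2 t (t+1) (by omega),
      fracSum_hcol_le α hα1 hα2 t t (by omega),
      show t + 2 - t - 1 = 1 by omega]
    push_cast
    ring
  · rw [if_neg (by omega), fracSum_hcol_ge α hα1 hα2 s (t+2) (by omega),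
      fracSum_hcol_ge α hα1 hα2 s (t+1) (by omega),
      fracSum_hcol_ge α hα1 hα2 s t (by omega),
      show t + 2 - s - 1 = (t - s - 1) + 2 by omega,
      show t + 1 - s - 1 = (t - s - 1) + 1 by omega]
    push_cast
    ring

end fracsum
/-- Green function column in terms of `Ff`. -/
noncomputable def Gc (b s m : ℕ) : ℝ :=
  (Ff α (b+2-s) / Ff α (b+3) * Ff α m - hcol α s m) / Real.Gamma α

section green

variable (hα1 : 1 < α) (hα2 : α ≤ 2)
include hα1

lemma Gamma_alpha_pos : 0 < Real.Gamma α := Real.Gamma_pos_of_pos (by linarith)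

lemma hcol_zero {s m : ℕ} (hm : m ≤ s + 1) : hcol α s m = 0 := by
  unfold hcol
  rcases Nat.eq_or_lt_of_le hm with h | h
  · rw [h, if_pos le_rfl, show s + 1 - s - 1 = 0 by omega, Ff_zero α hα1]
  · rw [if_neg (by omega)]

lemma hcol_nonneg (s m : ℕ) : 0 ≤ hcol α s m := by
  unfold hcol
  split_ifs
  · exact Ff_nonneg α hα1 _
  · exact le_rfl

lemma kappa_nonneg (b s : ℕ) : 0 ≤ Ff α (b+2-s) / Ff α (b+3) :=
  div_nonneg (Ff_nonneg α hα1 _) (Ff_nonneg α hα1 _)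

lemma kappa_le_one (b s : ℕ) : Ff α (b+2-s) / Ff α (b+3) ≤ 1 := by
  rw [div_le_one (Ff_pos α hα1 _ (by omega))]
  exact Ff_mono α hα1 (by omega)

lemma Gc_eq_left {b s m : ℕ} (hm : m ≤ s + 1) :
    Gc α b s m = Ff α (b+2-s) / Ff α (b+3) * Ff α m / Real.Gamma α := by
  unfold Gc
  rw [hcol_zero α hα1 hm, sub_zero]

lemma Gc_zero (b s : ℕ) : Gc α b s 0 = 0 := by
  rw [Gc_eq_left α hα1 (by omega), Ff_zero α hα1]
  simp

lemma Gc_right_zero (b s : ℕ) (hs : s ≤ b + 1) : Gc α b s (b+3) = 0 := by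
  unfold Gc
  rw [show hcol α s (b+3) = Ff α (b+2-s) by
    unfold hcol; rw [if_pos (by omega)]; congr 1; omega]
  rw [div_mul_eq_mul_div, mul_comm, ← div_mul_eq_mul_div,
    div_self (ne_of_gt (Ff_pos α hα1 _ (by omega))), one_mul, sub_self, zero_div]

include hα2

lemma Gc_succ_le {b s m : ℕ} (hs : s ≤ b + 1) (hm : s + 1 ≤ m) :
    Gc α b s (m+1) ≤ Gc α b s m := by
  unfold Gc
  rw [div_le_div_iff_of_pos_right (Gamma_alpha_pos α hα1)]
  have h1 : hcol α s (m+1) = hcol α s m + (α - 1) * Ee α (m - s - 1) := by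
    unfold hcol
    rw [if_pos (by omega), if_pos hm, show m + 1 - s - 1 = (m - s - 1) + 1 by omega,
      Ff_succ α hα1]
  rw [h1, Ff_succ α hα1 m]
  have h2 : Ee α m ≤ Ee α (m - s - 1) := Ee_anti α hα1 hα2 (by omega)
  have h3 : 0 ≤ Ff α (b+2-s) / Ff α (b+3) := kappa_nonneg α hα1 b s
  have h4 : Ff α (b+2-s) / Ff α (b+3) ≤ 1 := kappa_le_one α hα1 b s
  have h5 : 0 < Ee α m := Ee_pos α hα1 m
  have h7 : Ff α (b+2-s) / Ff α (b+3) * Ee α m ≤ Ee α (m - s - 1) :=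
    le_trans (mul_le_of_le_one_left h5.le h4) h2
  have h8 : (α - 1) * (Ff α (b+2-s) / Ff α (b+3) * Ee α m) ≤ (α - 1) * Ee α (m - s - 1) :=
    mul_le_mul_of_nonneg_left h7 (by linarith)
  nlinarith [h8]

lemma Gc_anti {b s m m' : ℕ} (hs : s ≤ b + 1) (hm : s + 1 ≤ m) (hmm : m ≤ m') :
    Gc α b s m' ≤ Gc α b s m := by
  induction m', hmm using Nat.le_induction with
  | base => exact le_rfl
  | succ n hn ih => exact le_trans (Gc_succ_le α hα1 hα2 hs (by omega)) ih

lemma Gc_nonneg {b s m : ℕ} (hs : s ≤ b + 1) (hm : m ≤ b + 3) : 0 ≤ Gc α b s m := by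
  rcases le_or_gt m (s+1) with h | h
  · rw [Gc_eq_left α hα1 h]
    have := kappa_nonneg α hα1 b s
    have := Ff_nonneg α hα1 m
    have := Gamma_alpha_pos α hα1
    positivity
  · rw [← Gc_right_zero α hα1 b s hs]
    exact Gc_anti α hα1 hα2 hs (by omega) hm

lemma Gc_le_diag {b s m : ℕ} (hs : s ≤ b + 1) (hm : m ≤ b + 3) :
    Gc α b s m ≤ Gc α b s (s+1) := by
  rcases le_or_gt m (s+1) with h | h
  · rw [Gc_eq_left α hα1 h, Gc_eq_left α hα1 le_rfl]
    have h1 := kappa_nonneg α hα1 b s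
    have h2 := Ff_mono α hα1 h
    have h3 := Gamma_alpha_pos α hα1
    gcongr
  · exact Gc_anti α hα1 hα2 hs le_rfl (le_of_lt h)

lemma fracDiff_Gc (b s : ℕ) (t : ℕ) :
    fracDiff α (Gc α b s) t = if t = s then -1 else 0 := by
  have hrw : ∀ m, Gc α b s m
      = (Ff α (b+2-s) / Ff α (b+3) / Real.Gamma α) * Ff α m
        + (-(1/Real.Gamma α)) * hcol α s m := by
    intro m
    unfold Gc
    ring
  have hΓ : Real.Gamma α ≠ 0 := ne_of_gt (Gamma_alpha_pos α hα1)
  unfold fracDiff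
  rw [fracSum_congr α (fun j _ => hrw j), fracSum_linear, fracSum_congr α (fun j _ => hrw j),
    fracSum_linear, fracSum_congr α (fun j _ => hrw j), fracSum_linear]
  have e1 := fracDiff_Ff α hα1 hα2 t
  have e2 := fracDiff_hcol α hα1 hα2 s t
  unfold fracDiff at e1 e2
  split_ifs with h
  · rw [if_pos h] at e2
    have e2' : 1/Real.Gamma α * (fracSum α (hcol α s) (t + 2)
        - 2 * fracSum α (hcol α s) (t + 1) + fracSum α (hcol α s) t) = 1 := by
      rw [e2]; field_simp
    linear_combination (Ff α (b+2-s) / Ff α (b+3) / Real.Gamma α) * e1 - e2'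
  · rw [if_neg h] at e2
    linear_combination (Ff α (b+2-s) / Ff α (b+3) / Real.Gamma α) * e1
      - (1/Real.Gamma α) * e2

end green
section gval

lemma fp_eq_Ff (x : ℝ) (k : ℕ) (h1 : x + 1 = α - 1 + k) (h2 : x - (α - 1) + 1 = k) :
    fp x (α-1) = Ff α k := by
  unfold fp Ff
  rw [h1, h2]

lemma Gval (b s m : ℕ) (hs : s ≤ b + 1) :
    G α b (α - 2 + m) s = Gc α b s m := by
  have hc2 : ((b+2-s:ℕ):ℝ) = (b:ℝ) + 2 - s := by
    rw [Nat.cast_sub (by omega)]; push_cast; ring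
  have c1 : fp (α - 2 + m) (α-1) = Ff α m := fp_eq_Ff α _ _ (by ring) (by ring)
  have c2 : fp (α + b - s) (α-1) = Ff α (b+2-s) :=
    fp_eq_Ff α _ _ (by rw [hc2]; ring) (by rw [hc2]; ring)
  have c3 : fp (α + b + 1) (α-1) = Ff α (b+3) :=
    fp_eq_Ff α _ _ (by push_cast; ring) (by push_cast; ring)
  unfold G
  split_ifs with hcond
  · have hm : s + 1 ≤ m := by
      have h1 : (s:ℝ) + 1 ≤ m := by linarith [hcond]
      exact_mod_cast h1
    have hc4 : ((m-s-1:ℕ):ℝ) = (m:ℝ) - s - 1 := by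
      rw [Nat.cast_sub (by omega), Nat.cast_sub (by omega)]; push_cast; ring
    have c4 : fp (α - 2 + m - s - 1) (α-1) = Ff α (m-s-1) :=
      fp_eq_Ff α _ _ (by rw [hc4]; ring) (by rw [hc4]; ring)
    unfold Gc hcol
    rw [if_pos hm, c1, c2, c3, c4]
    ring
  · have hm : ¬ (s + 1 ≤ m) := by
      intro hcon
      apply hcond
      have h1 : (s:ℝ) + 1 ≤ m := by exact_mod_cast hcon
      linarith
    unfold Gc hcol
    rw [if_neg hm, c1, c2, c3]
    ring

lemma Gval_diag (b s : ℕ) (hs : s ≤ b + 1) :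
    G α b ((s:ℝ) + α - 1) s = Gc α b s (s+1) := by
  rw [show (s:ℝ) + α - 1 = α - 2 + ((s+1:ℕ):ℝ) by push_cast; ring]
  exact Gval α b s (s+1) hs

lemma Gval_pt (b s k : ℕ) (hs : s ≤ b + 1) :
    G α b (α - 1 + (k:ℝ)) s = Gc α b s (k+1) := by
  rw [show α - 1 + (k:ℝ) = α - 2 + ((k+1:ℕ):ℝ) by push_cast; ring]
  exact Gval α b s (k+1) hs

end gval
/-- Prefix truncation of a sequence. -/
def trunc (x : ℕ → ℝ) (m k : ℕ) : ℝ := if k < m then x k else 0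

lemma trunc_congr {x x' : ℕ → ℝ} {m : ℕ} (h : ∀ k < m, x k = x' k) :
    trunc x m = trunc x' m := by
  funext k
  unfold trunc
  split_ifs with hk
  · exact h k hk
  · rfl

section truncfrac

variable (hα1 : 1 < α) (hα2 : α ≤ 2)
include hα1 hα2

lemma fracDiff_trunc (x : ℕ → ℝ) (n : ℕ) :
    fracDiff α x n = fracDiff α (trunc x (n+2)) n + x (n+2) := by
  have h0 : ∀ k, k ≤ n+1 → fracSum α x k = fracSum α (trunc x (n+2)) k := by
    intro k hk
    apply fracSum_congr
    intro j hj
    unfold trunc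
    rw [if_pos (by omega)]
  have h2 : fracSum α x (n+2) = fracSum α (trunc x (n+2)) (n+2) + x (n+2) := by
    unfold fracSum
    split_ifs with hα
    · unfold trunc
      rw [if_neg (by omega)]
      ring
    · have hlt : α < 2 := lt_of_le_of_ne hα2 hα
      have hΓ : Real.Gamma (2-α) ≠ 0 := ne_of_gt (Real.Gamma_pos_of_pos (by linarith))
      rw [Finset.sum_range_succ, Finset.sum_range_succ
        (f := fun j => fp (((n+2:ℕ):ℝ) - (j:ℝ) + 1 - α) (1-α) * trunc x (n+2) j)]
      have hcoef : fp (((n+2:ℕ):ℝ) - ((n+2:ℕ):ℝ) + 1 - α) (1-α) = Real.Gamma (2-α) := by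
        unfold fp
        rw [show ((n+2:ℕ):ℝ) - ((n+2:ℕ):ℝ) + 1 - α + 1 = 2 - α by ring,
            show ((n+2:ℕ):ℝ) - ((n+2:ℕ):ℝ) + 1 - α - (1 - α) + 1 = 1 by ring,
            Real.Gamma_one, div_one]
      have htr : trunc x (n+2) (n+2) = 0 := by
        unfold trunc
        rw [if_neg (by omega)]
      have hsame : ∑ j ∈ Finset.range (n+2), fp (((n+2:ℕ):ℝ) - (j:ℝ) + 1 - α) (1-α) * x j
          = ∑ j ∈ Finset.range (n+2), fp (((n+2:ℕ):ℝ) - (j:ℝ) + 1 - α) (1-α)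
              * trunc x (n+2) j := by
        refine Finset.sum_congr rfl (fun j hj => ?_)
        unfold trunc
        rw [if_pos (by simpa [Nat.lt_succ_iff] using Finset.mem_range.mp hj)]
      rw [hcoef, htr, hsame, mul_zero, add_zero]
      field_simp
  unfold fracDiff
  rw [h0 (n+1) le_rfl, h0 n (by omega), h2]
  ring

end truncfrac

/-- Recursively constructed shooting prefix: `vec ψ c n` agrees with the solution up to
index `n+1` and vanishes beyond.  -/
noncomputable def vec (ψ : (ℕ → ℝ) → ℕ → ℝ) (c : ℝ) : ℕ → ℕ → ℝ
  | 0 => fun k => if k = 1 then c else 0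
  | (n+1) => Function.update (vec ψ c n) (n+2) (ψ (vec ψ c n) n)

/-- Shooting solution with `sol 0 = 0`, `sol 1 = c`. -/
noncomputable def sol (ψ : (ℕ → ℝ) → ℕ → ℝ) (c : ℝ) (k : ℕ) : ℝ := vec ψ c k k

section shoot

variable (ψ : (ℕ → ℝ) → ℕ → ℝ) (c : ℝ)

lemma vec_eq_sol : ∀ n k, k ≤ n + 1 → vec ψ c n k = sol ψ c k := by
  intro n
  induction n with
  | zero =>
    intro k hk
    interval_cases k
    · rfl
    · show vec ψ c 0 1 = vec ψ c 1 1
      rw [show vec ψ c 1 = Function.update (vec ψ c 0) 2 (ψ (vec ψ c 0) 0) from rfl,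
        Function.update_of_ne (by omega)]
  | succ n ih =>
    intro k hk
    rcases Nat.lt_or_ge k (n+2) with h | h
    · rw [show vec ψ c (n+1) = Function.update (vec ψ c n) (n+2) (ψ (vec ψ c n) n) from rfl,
        Function.update_of_ne (by omega)]
      exact ih k (by omega)
    · have hk2 : k = n + 2 := by omega
      subst hk2
      show vec ψ c (n+1) (n+2) = vec ψ c (n+2) (n+2)
      rw [show vec ψ c (n+2) = Function.update (vec ψ c (n+1)) (n+3) (ψ (vec ψ c (n+1)) (n+1))
          from rfl,
        Function.update_of_ne (by omega)]

lemma sol_zero : sol ψ c 0 = 0 := rfl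

lemma sol_one : sol ψ c 1 = c := by
  show vec ψ c 1 1 = c
  rw [show vec ψ c 1 = Function.update (vec ψ c 0) 2 (ψ (vec ψ c 0) 0) from rfl,
    Function.update_of_ne (by omega)]
  rfl

lemma sol_rec (hψ : ∀ x x' n, (∀ k, k ≤ n+1 → x k = x' k) → ψ x n = ψ x' n) (n : ℕ) :
    sol ψ c (n+2) = ψ (sol ψ c) n := by
  show vec ψ c (n+2) (n+2) = ψ (sol ψ c) n
  rw [show vec ψ c (n+2) = Function.update (vec ψ c (n+1)) (n+3) (ψ (vec ψ c (n+1)) (n+1))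
      from rfl,
    Function.update_of_ne (by omega),
    show vec ψ c (n+1) = Function.update (vec ψ c n) (n+2) (ψ (vec ψ c n) n) from rfl,
    Function.update_self]
  exact hψ _ _ n (fun k hk => vec_eq_sol ψ c n k hk)

lemma vec_continuous
    (hψc : ∀ (n : ℕ) (v : ℝ → ℕ → ℝ), (∀ k, Continuous fun c => v c k) →
      Continuous fun c => ψ (v c) n) :
    ∀ n k, Continuous fun c => vec ψ c n k := by
  intro n
  induction n with
  | zero =>
    intro k
    show Continuous fun c => if k = 1 then c else 0
    split_ifs
    · exact continuous_id
    · exact continuous_const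
  | succ n ih =>
    intro k
    show Continuous fun c => Function.update (vec ψ c n) (n+2) (ψ (vec ψ c n) n) k
    rcases eq_or_ne k (n+2) with h | h
    · subst h
      simp only [Function.update_self]
      exact hψc n (fun c => vec ψ c n) ih
    · simp only [Function.update_of_ne h]
      exact ih k

lemma sol_continuous
    (hψc : ∀ (n : ℕ) (v : ℝ → ℕ → ℝ), (∀ k, Continuous fun c => v c k) →
      Continuous fun c => ψ (v c) n) (k : ℕ) :
    Continuous fun c => sol ψ c k :=
  vec_continuous ψ hψc k k

end shoot

section fracdifflin

lemma fracDiff_linear (a c : ℝ) (x w : ℕ → ℝ) (t : ℕ) :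
    fracDiff α (fun m => a * x m + c * w m) t
      = a * fracDiff α x t + c * fracDiff α w t := by
  unfold fracDiff
  rw [fracSum_linear, fracSum_linear, fracSum_linear]
  ring

lemma fracDiff_sum {ι : Type*} (S : Finset ι) (cs : ι → ℝ) (w : ι → ℕ → ℝ) (t : ℕ) :
    fracDiff α (fun m => ∑ s ∈ S, cs s * w s m) t
      = ∑ s ∈ S, cs s * fracDiff α (w s) t := by
  unfold fracDiff
  rw [fracSum_sum, fracSum_sum, fracSum_sum, Finset.mul_sum, ← Finset.sum_sub_distrib,
    ← Finset.sum_add_distrib]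
  refine Finset.sum_congr rfl (fun s hs => ?_)
  ring

end fracdifflin

/-- Continuity of `c ↦ fracSum α (trunc (v c) m) k`. -/
lemma fracSum_trunc_continuous (v : ℝ → ℕ → ℝ) (hv : ∀ k, Continuous fun c => v c k)
    (m k : ℕ) : Continuous fun c => fracSum α (trunc (v c) m) k := by
  unfold fracSum
  split_ifs with hα
  · show Continuous fun c => trunc (v c) m k
    unfold trunc
    split_ifs
    · exact hv k
    · exact continuous_const
  · apply Continuous.mul continuous_const
    apply continuous_finset_sum
    intro j hj
    apply Continuous.mul continuous_const
    show Continuous fun c => trunc (v c) m j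
    unfold trunc
    split_ifs
    · exact hv j
    · exact continuous_const
/-- The shooting step functional for the nonlinear problem. -/
noncomputable def psi (q : ℕ → ℝ) (Fc : ℝ → ℝ) (x : ℕ → ℝ) (n : ℕ) : ℝ :=
  -(fracDiff α (trunc x (n+2)) n) - q n * Fc (x (n+1))

section psisec

variable (q : ℕ → ℝ) (Fc : ℝ → ℝ)

lemma psi_prefix : ∀ x x' n, (∀ k, k ≤ n+1 → x k = x' k) →
    psi α q Fc x n = psi α q Fc x' n := by
  intro x x' n h
  unfold psi
  rw [trunc_congr (fun k hk => h k (by omega)), h (n+1) le_rfl]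

lemma psi_cont (hFc : Continuous Fc) :
    ∀ (n : ℕ) (v : ℝ → ℕ → ℝ), (∀ k, Continuous fun c => v c k) →
      Continuous fun c => psi α q Fc (v c) n := by
  intro n v hv
  unfold psi
  apply Continuous.sub
  · apply Continuous.neg
    show Continuous fun c => (fracSum α (trunc (v c) (n+2)) (n+2)
      - 2 * fracSum α (trunc (v c) (n+2)) (n+1) + fracSum α (trunc (v c) (n+2)) n)
    exact ((fracSum_trunc_continuous α v hv (n+2) (n+2)).sub
      (continuous_const.mul (fracSum_trunc_continuous α v hv (n+2) (n+1)))).add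
      (fracSum_trunc_continuous α v hv (n+2) n)
  · exact continuous_const.mul (hFc.comp (hv (n+1)))

variable (hα1 : 1 < α) (hα2 : α ≤ 2)
include hα1 hα2

lemma sol_eqn (c : ℝ) (n : ℕ) :
    fracDiff α (sol (psi α q Fc) c) n
      + q n * Fc (sol (psi α q Fc) c (n+1)) = 0 := by
  have h1 := fracDiff_trunc α hα1 hα2 (sol (psi α q Fc) c) n
  have h2 := sol_rec (psi α q Fc) c (psi_prefix α q Fc) n
  have h3 : psi α q Fc (sol (psi α q Fc) c) n
      = -(fracDiff α (trunc (sol (psi α q Fc) c) (n+2)) n)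
        - q n * Fc (sol (psi α q Fc) c (n+1)) := rfl
  rw [h3] at h2
  rw [h1, h2]
  ring

/-- Key step-compare: any two functions with equal prefixes and equal `fracDiff` at `t`
agree at `t+2`. -/
lemma step_eq (x w : ℕ → ℝ) (t : ℕ)
    (hpre : ∀ k, k ≤ t+1 → x k = w k)
    (hfd : fracDiff α x t = fracDiff α w t) : x (t+2) = w (t+2) := by
  have h1 := fracDiff_trunc α hα1 hα2 x t
  have h2 := fracDiff_trunc α hα1 hα2 w t
  have h3 : trunc x (t+2) = trunc w (t+2) := trunc_congr (fun k hk => hpre k (by omega))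
  rw [h3] at h1
  linarith

end psisec

end S10

open S10 in
set_option maxHeartbeats 1000000 in
/-- Existence of a nontrivial positive solution to the discrete fractional BVP
`Δ^α y(t) + q(t+α-1)·f(y(t+α-1)) = 0`, `t = 0,…,b+1`, `y(α-2) = y(α+b+1) = 0`,
under hypotheses `(H₁)`–`(H₂)`, with `r₁ ≤ ‖y‖ ≤ r₂` (sup norm over `T_b`).
Here `y k` stands for `y(α-2+k)` and `q s` stands for `q(α-1+s)`. -/
theorem statement10 (α : ℝ) (b : ℕ) (hα1 : 1 < α) (hα2 : α ≤ 2) (hb : 2 ≤ b)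
    (q : ℕ → ℝ) (hq : ∀ s : ℕ, s ≤ b + 1 → 0 ≤ q s)
    (hqnt : ∃ s : ℕ, s ≤ b + 1 ∧ q s ≠ 0)
    (lam : ℝ) (hlam : lam ∈ Set.Ioo (0 : ℝ) 1)
    (hG : ∀ s : ℕ, s ≤ b + 1 →
      ∀ k : ℕ, k ≤ b + 1 → (b + α) / 4 ≤ α - 1 + k → α - 1 + k ≤ 3 * (b + α) / 4 →
        lam * G α b ((s : ℝ) + α - 1) s ≤ G α b (α - 1 + k) s)
    (hγ : 0 < ∑ s ∈ Finset.range (b + 2), G α b ((s : ℝ) + α - 1) s * q s)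
    (hS : 0 < ∑ s ∈ (Finset.range (b + 2)).filter
        (fun s : ℕ => (b + α) / 4 ≤ (s : ℝ) ∧ (s : ℝ) ≤ 3 * (b + α) / 4),
        lam * G α b ((s : ℝ) + α - 1) s * q s)
    (f : ℝ → ℝ) (hf0 : ∀ x : ℝ, 0 ≤ x → 0 ≤ f x)
    (hfc : ContinuousOn f (Set.Ici (0 : ℝ)))
    (r₁ r₂ : ℝ) (hr₁ : 0 < r₁) (hr₁₂ : r₁ < r₂)
    (hf1 : ∀ x : ℝ, 0 ≤ x → x ≤ r₁ →
      (∑ s ∈ (Finset.range (b + 2)).filter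
          (fun s : ℕ => (b + α) / 4 ≤ (s : ℝ) ∧ (s : ℝ) ≤ 3 * (b + α) / 4),
          lam * G α b ((s : ℝ) + α - 1) s * q s)⁻¹ * r₁ ≤ f x)
    (hf2 : ∀ x : ℝ, 0 ≤ x → x ≤ r₂ →
      f x ≤ (∑ s ∈ Finset.range (b + 2), G α b ((s : ℝ) + α - 1) s * q s)⁻¹ * r₂) :
    ∃ y : ℕ → ℝ,
      (∀ t : ℕ, t ≤ b + 1 → fracDiff α y t + q t * f (y (t + 1)) = 0) ∧
      y 0 = 0 ∧ y (b + 3) = 0 ∧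
      (∀ k : ℕ, k ≤ b + 3 → 0 ≤ y k) ∧
      r₁ ≤ (Finset.range (b + 4)).sup' (Finset.nonempty_range_iff.mpr (by omega))
        (fun k => |y k|) ∧
      (Finset.range (b + 4)).sup' (Finset.nonempty_range_iff.mpr (by omega))
        (fun k => |y k|) ≤ r₂ := by
  classical
  obtain ⟨hlam0, hlam1⟩ := hlam
  have hr₂ : 0 < r₂ := lt_trans hr₁ hr₁₂
  have hΓα : 0 < Real.Gamma α := Gamma_alpha_pos α hα1
  have hbR : (2:ℝ) ≤ (b:ℝ) := by exact_mod_cast hb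
  -- rewrite the hypothesis sums in terms of `Gc`
  have hγ' : (∑ s ∈ Finset.range (b + 2), G α b ((s : ℝ) + α - 1) s * q s)
      = ∑ s ∈ Finset.range (b + 2), Gc α b s (s+1) * q s := by
    refine Finset.sum_congr rfl (fun s hs => ?_)
    rw [Gval_diag α b s (by have := Finset.mem_range.mp hs; omega)]
  have hS' : (∑ s ∈ (Finset.range (b + 2)).filter
        (fun s : ℕ => (b + α) / 4 ≤ (s : ℝ) ∧ (s : ℝ) ≤ 3 * (b + α) / 4),
        lam * G α b ((s : ℝ) + α - 1) s * q s)
      = ∑ s ∈ (Finset.range (b + 2)).filter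
        (fun s : ℕ => (b + α) / 4 ≤ (s : ℝ) ∧ (s : ℝ) ≤ 3 * (b + α) / 4),
        lam * Gc α b s (s+1) * q s := by
    refine Finset.sum_congr rfl (fun s hs => ?_)
    have hs' : s ∈ Finset.range (b+2) := (Finset.mem_filter.mp hs).1
    rw [Gval_diag α b s (by have := Finset.mem_range.mp hs'; omega)]
  rw [hγ'] at hγ
  rw [hS'] at hS
  rw [hγ'] at hf2
  rw [hS'] at hf1
  set Sf := (Finset.range (b + 2)).filter
        (fun s : ℕ => (b + α) / 4 ≤ (s : ℝ) ∧ (s : ℝ) ≤ 3 * (b + α) / 4) with hSfdef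
  set SG0 := ∑ s ∈ Finset.range (b + 2), Gc α b s (s+1) * q s with hSG0def
  set SGS := ∑ s ∈ Sf, lam * Gc α b s (s+1) * q s with hSGSdef
  -- the truncated nonlinearity
  set Fc : ℝ → ℝ := fun x => f (min (max x 0) r₂) with hFcdef
  have hFcarg : ∀ x : ℝ, 0 ≤ min (max x 0) r₂ ∧ min (max x 0) r₂ ≤ r₂ :=
    fun x => ⟨le_min (le_max_right x 0) hr₂.le, min_le_right _ _⟩
  have hFc0 : ∀ x, 0 ≤ Fc x := fun x => hf0 _ (hFcarg x).1
  have hFcK : ∀ x, Fc x ≤ SG0⁻¹ * r₂ := fun x => hf2 _ (hFcarg x).1 (hFcarg x).2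
  have hFc1 : ∀ x : ℝ, x ≤ r₁ → SGS⁻¹ * r₁ ≤ Fc x := by
    intro x hx
    have harg : min (max x 0) r₂ ≤ r₁ := le_trans (min_le_left _ _) (max_le hx hr₁.le)
    exact hf1 _ (hFcarg x).1 harg
  have hFceq : ∀ x : ℝ, 0 ≤ x → x ≤ r₂ → Fc x = f x := by
    intro x h0 h2
    show f (min (max x 0) r₂) = f x
    rw [max_eq_left h0, min_eq_left h2]
  have hFccont : Continuous Fc :=
    ContinuousOn.comp_continuous hfc
      ((continuous_id.max continuous_const).min continuous_const)
      (fun x => (hFcarg x).1)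
  -- shooting solution
  set ψ := psi α q Fc with hψdef
  have heqn : ∀ (c : ℝ) (n : ℕ),
      fracDiff α (sol ψ c) n + q n * Fc (sol ψ c (n+1)) = 0 :=
    fun c n => sol_eqn α q Fc hα1 hα2 c n
  -- Green representation data
  set zz : ℝ → ℕ → ℝ :=
    fun c m => ∑ s ∈ Finset.range (b + 2), (q s * Fc (sol ψ c (s+1))) * Gc α b s m
    with hzzdef
  have hqnn : ∀ s ∈ Finset.range (b + 2), 0 ≤ q s :=
    fun s hs => hq s (by have := Finset.mem_range.mp hs; omega)
  have hKnn : 0 ≤ SG0⁻¹ * r₂ := by positivity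
  have hzz0 : ∀ (c : ℝ) (m : ℕ), m ≤ b + 3 → 0 ≤ zz c m := by
    intro c m hm
    apply Finset.sum_nonneg
    intro s hs
    have hs' : s ≤ b + 1 := by have := Finset.mem_range.mp hs; omega
    exact mul_nonneg (mul_nonneg (hqnn s hs) (hFc0 _)) (Gc_nonneg α hα1 hα2 hs' hm)
  have hzzr₂ : ∀ (c : ℝ) (m : ℕ), m ≤ b + 3 → zz c m ≤ r₂ := by
    intro c m hm
    have step : zz c m ≤ ∑ s ∈ Finset.range (b + 2), (q s * (SG0⁻¹ * r₂)) * Gc α b s (s+1) := by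
      apply Finset.sum_le_sum
      intro s hs
      have hs' : s ≤ b + 1 := by have := Finset.mem_range.mp hs; omega
      apply mul_le_mul
      · exact mul_le_mul_of_nonneg_left (hFcK _) (hqnn s hs)
      · exact Gc_le_diag α hα1 hα2 hs' hm
      · exact Gc_nonneg α hα1 hα2 hs' hm
      · exact mul_nonneg (hqnn s hs) hKnn
    have heq : ∑ s ∈ Finset.range (b + 2), (q s * (SG0⁻¹ * r₂)) * Gc α b s (s+1)
        = (SG0⁻¹ * r₂) * SG0 := by
      rw [hSG0def, Finset.mul_sum]
      exact Finset.sum_congr rfl (fun s hs => by ring)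
    have heq2 : (SG0⁻¹ * r₂) * SG0 = r₂ := by
      rw [mul_comm (SG0⁻¹) r₂, mul_assoc, inv_mul_cancel₀ (ne_of_gt hγ), mul_one]
    rw [heq, heq2] at step
    exact step
  have hzzz : ∀ c : ℝ, zz c 0 = 0 := by
    intro c
    apply Finset.sum_eq_zero
    intro s hs
    rw [Gc_zero α hα1 b s, mul_zero]
  have hzzb3 : ∀ c : ℝ, zz c (b+3) = 0 := by
    intro c
    apply Finset.sum_eq_zero
    intro s hs
    have hs' : s ≤ b + 1 := by have := Finset.mem_range.mp hs; omega
    rw [Gc_right_zero α hα1 b s hs', mul_zero]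
  -- normalized homogeneous solution u m = Ff α m / Γ α
  have hu1 : Ff α 1 / Real.Gamma α = 1 := by
    show Real.Gamma (α - 1 + (1:ℕ)) / Real.Gamma ((1:ℕ):ℝ) / Real.Gamma α = 1
    rw [show (α - 1 + ((1:ℕ):ℝ)) = α by push_cast; ring, Nat.cast_one, Real.Gamma_one, div_one,
      div_self (ne_of_gt hΓα)]
  have hub3 : 0 < Ff α (b+3) / Real.Gamma α :=
    div_pos (Ff_pos α hα1 _ (by omega)) hΓα
  -- fracDiff of u and of zz
  have hfdu : ∀ t : ℕ, fracDiff α (fun m => Ff α m / Real.Gamma α) t = 0 := by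
    intro t
    have h1 : (fun m => Ff α m / Real.Gamma α)
        = fun m => (1/Real.Gamma α) * Ff α m + 0 * Ff α m := by
      funext m; ring
    rw [h1, fracDiff_linear, fracDiff_Ff α hα1 hα2]
    ring
  have hfdz : ∀ (c : ℝ) (t : ℕ), t ≤ b + 1 →
      fracDiff α (zz c) t = -(q t * Fc (sol ψ c (t+1))) := by
    intro c t ht
    have h1 : zz c = fun m => ∑ s ∈ Finset.range (b + 2),
        (q s * Fc (sol ψ c (s+1))) * Gc α b s m := rfl
    rw [h1, fracDiff_sum]
    have h2 : ∀ s ∈ Finset.range (b+2),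
        (q s * Fc (sol ψ c (s+1))) * fracDiff α (Gc α b s) t
          = if s = t then -(q s * Fc (sol ψ c (s+1))) else 0 := by
      intro s hs
      rw [fracDiff_Gc α hα1 hα2 b s t]
      rcases eq_or_ne s t with h | h
      · rw [if_pos h, if_pos h.symm]; ring
      · rw [if_neg (Ne.symm h), if_neg h]; ring
    rw [Finset.sum_congr rfl h2, Finset.sum_ite_eq' (Finset.range (b+2)) t
      (fun s => -(q s * Fc (sol ψ c (s+1)))), if_pos (Finset.mem_range.mpr (by omega))]
  -- the Green-representation of the shooting solution
  have hrep : ∀ (c : ℝ) (m : ℕ), m ≤ b + 3 →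
      sol ψ c m = (c - zz c 1) * (Ff α m / Real.Gamma α) + zz c m := by
    intro c m
    induction m using Nat.strong_induction_on with
    | _ m ih =>
      match m with
      | 0 =>
        intro _
        rw [sol_zero, Ff_zero α hα1, hzzz c]
        simp
      | 1 =>
        intro _
        rw [sol_one, hu1]
        ring
      | (t+2) =>
        intro hm
        have ht : t ≤ b + 1 := by omega
        show sol ψ c (t+2)
          = (fun m => (c - zz c 1) * (Ff α m / Real.Gamma α) + zz c m) (t+2)
        apply step_eq α hα1 hα2 (sol ψ c)
          (fun m => (c - zz c 1) * (Ff α m / Real.Gamma α) + zz c m) t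
        · intro k hk
          exact ih k (by omega) (by omega)
        · have hx : fracDiff α (sol ψ c) t = -(q t * Fc (sol ψ c (t+1))) := by
            linarith [heqn c t]
          have hw : fracDiff α
              (fun m => (c - zz c 1) * (Ff α m / Real.Gamma α) + zz c m) t
              = -(q t * Fc (sol ψ c (t+1))) := by
            have h1 : (fun m => (c - zz c 1) * (Ff α m / Real.Gamma α) + zz c m)
                = fun m => (c - zz c 1) * ((fun mm => Ff α mm / Real.Gamma α) m)
                    + 1 * ((zz c) m) := by
              funext m; ring
            rw [h1, fracDiff_linear, hfdu t, hfdz c t ht]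
            ring
          rw [hx, hw]
  -- IVT for the shooting parameter
  set φ : ℝ → ℝ := fun c => sol ψ c (b+3) with hφdef
  have hφc : Continuous φ :=
    sol_continuous ψ (hψdef ▸ psi_cont α q Fc hFccont) (b+3)
  have hφeq : ∀ c, φ c = (c - zz c 1) * (Ff α (b+3) / Real.Gamma α) := by
    intro c
    show sol ψ c (b+3) = _
    rw [hrep c (b+3) le_rfl, hzzb3 c]
    ring
  have h0le : φ 0 ≤ 0 := by
    rw [hφeq]
    have h1 := hzz0 0 1 (by omega)
    nlinarith [hub3]
  have h0ge : 0 ≤ φ r₂ := by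
    rw [hφeq]
    have h1 := hzzr₂ r₂ 1 (by omega)
    nlinarith [hub3]
  obtain ⟨c₀, hc₀mem, hc₀⟩ :=
    intermediate_value_Icc hr₂.le hφc.continuousOn ⟨h0le, h0ge⟩
  have hc₀z : c₀ - zz c₀ 1 = 0 := by
    have h1 := hφeq c₀
    rw [hc₀] at h1
    rcases mul_eq_zero.mp h1.symm with h | h
    · exact h
    · exact absurd h (ne_of_gt hub3)
  have hyrep : ∀ m, m ≤ b + 3 → sol ψ c₀ m = zz c₀ m := by
    intro m hm
    rw [hrep c₀ m hm, hc₀z]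
    ring
  have hybd : ∀ m, m ≤ b + 3 → 0 ≤ sol ψ c₀ m ∧ sol ψ c₀ m ≤ r₂ := fun m hm =>
    ⟨(hyrep m hm) ▸ hzz0 c₀ m hm, (hyrep m hm) ▸ hzzr₂ c₀ m hm⟩
  refine ⟨sol ψ c₀, ?_, sol_zero ψ c₀, ?_, ?_, ?_, ?_⟩
  · -- the BVP equation
    intro t ht
    have h1 := heqn c₀ t
    have h2 := hybd (t+1) (by omega)
    rwa [hFceq _ h2.1 h2.2] at h1
  · rw [hyrep (b+3) le_rfl, hzzb3]
  · intro k hk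
    exact (hybd k hk).1
  · -- r₁ ≤ sup-norm
    by_contra hcon
    push_neg at hcon
    have hall : ∀ k, k ≤ b + 3 → sol ψ c₀ k < r₁ := by
      intro k hk
      calc sol ψ c₀ k ≤ |sol ψ c₀ k| := le_abs_self _
        _ ≤ (Finset.range (b + 4)).sup' (Finset.nonempty_range_iff.mpr (by omega))
            (fun k => |sol ψ c₀ k|) :=
          Finset.le_sup' (fun k => |sol ψ c₀ k|) (Finset.mem_range.mpr (by omega))
        _ < r₁ := hcon
    obtain ⟨kst, hkb, hcond1, hcond2⟩ : ∃ k : ℕ, k ≤ b + 1 ∧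
        (b + α)/4 ≤ α - 1 + k ∧ α - 1 + k ≤ 3*(b + α)/4 := by
      refine ⟨⌈(b+α)/4 - α + 1⌉₊, ?_, ?_, ?_⟩
      · have hL0 : (0:ℝ) ≤ (b+α)/4 - α + 1 := by linarith
        have hc := Nat.ceil_lt_add_one hL0
        have hcc : ((⌈(b+α)/4 - α + 1⌉₊ : ℕ):ℝ) < ((b+2:ℕ):ℝ) := by
          push_cast
          linarith
        have := Nat.cast_lt.mp hcc
        omega
      · have := Nat.le_ceil ((b+α)/4 - α + 1)
        linarith
      · have hL0 : (0:ℝ) ≤ (b+α)/4 - α + 1 := by linarith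
        have hc := Nat.ceil_lt_add_one hL0
        linarith
    have hkst3 : kst + 1 ≤ b + 3 := by omega
    have hP0 : 0 ≤ SGS⁻¹ * r₁ := by positivity
    have hstep : ∀ s ∈ Sf, (lam * Gc α b s (s+1) * q s) * (SGS⁻¹ * r₁)
        ≤ (q s * Fc (sol ψ c₀ (s+1))) * Gc α b s (kst+1) := by
      intro s hs
      have hsr : s ∈ Finset.range (b+2) := (Finset.mem_filter.mp hs).1
      have hs' : s ≤ b + 1 := by have := Finset.mem_range.mp hsr; omega
      have hGc1 : lam * Gc α b s (s+1) ≤ Gc α b s (kst+1) := by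
        have := hG s hs' kst hkb hcond1 hcond2
        rwa [Gval_diag α b s hs', Gval_pt α b s kst hs'] at this
      have hod : 0 ≤ lam * Gc α b s (s+1) :=
        mul_nonneg hlam0.le (Gc_nonneg α hα1 hα2 hs' (by omega))
      have hFcs : SGS⁻¹ * r₁ ≤ Fc (sol ψ c₀ (s+1)) :=
        hFc1 _ (le_of_lt (hall (s+1) (by omega)))
      calc (lam * Gc α b s (s+1) * q s) * (SGS⁻¹ * r₁)
          = (q s * (SGS⁻¹ * r₁)) * (lam * Gc α b s (s+1)) := by ring
        _ ≤ (q s * Fc (sol ψ c₀ (s+1))) * Gc α b s (kst+1) :=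
          mul_le_mul (mul_le_mul_of_nonneg_left hFcs (hqnn s hsr)) hGc1 hod
            (mul_nonneg (hqnn s hsr) (hFc0 _))
    have h1 : ∑ s ∈ Sf, (lam * Gc α b s (s+1) * q s) * (SGS⁻¹ * r₁) = r₁ := by
      rw [← Finset.sum_mul, ← hSGSdef, ← mul_assoc, mul_inv_cancel₀ (ne_of_gt hS), one_mul]
    have hlow : r₁ ≤ sol ψ c₀ (kst+1) := by
      rw [hyrep (kst+1) hkst3]
      calc r₁ = ∑ s ∈ Sf, (lam * Gc α b s (s+1) * q s) * (SGS⁻¹ * r₁) := h1.symm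
        _ ≤ ∑ s ∈ Sf, (q s * Fc (sol ψ c₀ (s+1))) * Gc α b s (kst+1) :=
          Finset.sum_le_sum hstep
        _ ≤ ∑ s ∈ Finset.range (b+2), (q s * Fc (sol ψ c₀ (s+1))) * Gc α b s (kst+1) := by
          apply Finset.sum_le_sum_of_subset_of_nonneg (Finset.filter_subset _ _)
          intro s hs hns
          have hs' : s ≤ b + 1 := by have := Finset.mem_range.mp hs; omega
          exact mul_nonneg (mul_nonneg (hqnn s hs) (hFc0 _))
            (Gc_nonneg α hα1 hα2 hs' (by omega))
        _ = zz c₀ (kst+1) := by rw [hzzdef]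
    linarith [hall (kst+1) hkst3, hlow]
  · -- sup-norm ≤ r₂
    apply Finset.sup'_le
    intro k hk
    have hk' : k ≤ b + 3 := by have := Finset.mem_range.mp hk; omega
    rw [abs_of_nonneg (hybd k hk').1]
    exact (hybd k hk').2
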